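/- Let (X, D) be a locally compact, complete metric space, α > 1, and Ω ⊆ X an open set with D_α(Ω) ≠ ∅. Let (d_n)_{n∈ℕ} ⊆ D_α(Ω) and d ∈ D_α(Ω). If d_n → d uniformly on compact subsets of Ω × Ω, then the functionals J_{d_n} Γ-converge to J_d on B(Ω): (liminf) for every sequence (μ_n) ⊆ B(Ω) converging weakly* to μ ∈ B(Ω) one has J_d(μ) ≤ liminf_n J_{d_n}(μ_n); (limsup) for every μ ∈ B(Ω) there exists a sequence (μ_n) ⊆ B(Ω) converging weakly* to μ with limsup_n J_{d_n}(μ_n) ≤ J_d(μ). -/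

import Mathlib

open Filter MeasureTheory Set
open scoped ENNReal Topology

/-- Length of the curve `γ` on the interval `[a, b]`, with respect to the
(candidate) distance `d`, defined as a supremum over finite partitions. -/
noncomputable def pathLengthOn {E : Type*} (d : E → E → ℝ) (γ : ℝ → E) (a b : ℝ) : ℝ≥0∞ :=
  ⨆ (k : ℕ) (t : Fin (k + 1) → ℝ) (_ : Monotone t) (_ : t 0 = a) (_ : t (Fin.last k) = b),
    ∑ i : Fin k, ENNReal.ofReal (d (γ (t i.succ)) (γ (t i.castSucc)))

/-- Length of the curve `γ : [0,1] → E` with respect to `d`. -/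
noncomputable def pathLength {E : Type*} (d : E → E → ℝ) (γ : ℝ → E) : ℝ≥0∞ :=
  pathLengthOn d γ 0 1

/-- `d` is a distance on `E`. -/
def IsDistance {E : Type*} (d : E → E → ℝ) : Prop :=
  (∀ x y, d x y = d y x) ∧ (∀ x y z, d x z ≤ d x y + d y z) ∧ ∀ x y, d x y = 0 ↔ x = y

/-- `γ : [0,1] → E` is a Lipschitz curve with respect to `d`. -/
def LipCurve {E : Type*} (d : E → E → ℝ) (γ : ℝ → E) : Prop :=
  ∃ K : ℝ, ∀ s ∈ Icc (0 : ℝ) 1, ∀ t ∈ Icc (0 : ℝ) 1, d (γ s) (γ t) ≤ K * |s - t|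

/-- `(E, d)` is a length space: `d x y` is the infimum of lengths of Lipschitz
curves `γ : [0,1] → E` joining `x` to `y`. -/
def IsLengthDist {E : Type*} (d : E → E → ℝ) : Prop :=
  ∀ x y : E, ENNReal.ofReal (d x y) =
    ⨅ (γ : ℝ → E) (_ : LipCurve d γ) (_ : γ 0 = x) (_ : γ 1 = y), pathLength d γ

/-- `d ∈ 𝒟_α(Ω)` : `d` is a distance on `Ω` making it a length space and satisfying
`α⁻¹ D ≤ d ≤ α D`. -/
def MemD {X : Type*} [MetricSpace X] (α : ℝ) (Ω : Set X) (d : Ω → Ω → ℝ) : Prop :=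
  IsDistance d ∧ IsLengthDist d ∧
    ∀ x y : Ω, α⁻¹ * dist (x : X) (y : X) ≤ d x y ∧ d x y ≤ α * dist (x : X) (y : X)

/-- Uniform convergence `dn → d` on compact subsets of `E × E`. -/
def TendstoUnifCompactly {E : Type*} [TopologicalSpace E]
    (dn : ℕ → E → E → ℝ) (d : E → E → ℝ) : Prop :=
  ∀ K : Set (E × E), IsCompact K → ∀ ε : ℝ, 0 < ε →
    ∃ N : ℕ, ∀ n ≥ N, ∀ p ∈ K, |dn n p.1 p.2 - d p.1 p.2| < ε

/-- `e` is a continuous extension of `d : Ω → Ω → ℝ` to the closure of `Ω`. -/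
def IsContExt {X : Type*} [MetricSpace X] (Ω : Set X) (d : Ω → Ω → ℝ)
    (e : closure Ω → closure Ω → ℝ) : Prop :=
  Continuous (fun p : closure Ω × closure Ω => e p.1 p.2) ∧
    ∀ x y : Ω, e ⟨x, subset_closure x.2⟩ ⟨y, subset_closure y.2⟩ = d x y

/-- `(E, d)` is a geodesic space: any two points are joined by a constant-speed curve
`γ : [0,1] → E` whose length on each subinterval `[t,s]` equals `d (γ t) (γ s)`. -/
def IsGeodesicDist {E : Type*} (d : E → E → ℝ) : Prop :=
  ∀ x y : E, ∃ γ : ℝ → E, γ 0 = x ∧ γ 1 = y ∧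
    (∀ t s : ℝ, 0 ≤ t → t ≤ s → s ≤ 1 →
      pathLengthOn d γ t s = pathLength d γ * ENNReal.ofReal (s - t)) ∧
    ∀ t s : ℝ, 0 ≤ t → t ≤ s → s ≤ 1 →
      pathLengthOn d γ t s = ENNReal.ofReal (d (γ t) (γ s))

/-- Uniform convergence on `[0,1]` of a sequence of curves. -/
def UnifConvCurves {E : Type*} [MetricSpace E] (γn : ℕ → ℝ → E) (γ : ℝ → E) : Prop :=
  ∀ ε : ℝ, 0 < ε → ∃ N : ℕ, ∀ n ≥ N, ∀ t ∈ Icc (0 : ℝ) 1, dist (γn n t) (γ t) < ε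

/-- Γ-convergence of the length functionals `L_{dn}` to `L_d` on the space of
Lipschitz curves `[0,1] → E` with the topology of uniform convergence. -/
def GammaConvLengths {E : Type*} [MetricSpace E] (dn : ℕ → E → E → ℝ) (d : E → E → ℝ) : Prop :=
  (∀ (γn : ℕ → ℝ → E) (γ : ℝ → E),
      (∀ n, LipCurve (fun x y : E => dist x y) (γn n)) →
      LipCurve (fun x y : E => dist x y) γ → UnifConvCurves γn γ →
      pathLength d γ ≤ liminf (fun n => pathLength (dn n) (γn n)) atTop) ∧
  ∀ γ : ℝ → E, LipCurve (fun x y : E => dist x y) γ →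
    ∃ γn : ℕ → ℝ → E, (∀ n, LipCurve (fun x y : E => dist x y) (γn n)) ∧
      UnifConvCurves γn γ ∧
      limsup (fun n => pathLength (dn n) (γn n)) atTop ≤ pathLength d γ

/-- Weak* convergence of finite Borel measures, tested against `C₀` functions. -/
def WeakStarConv {Y : Type*} [TopologicalSpace Y] [MeasurableSpace Y]
    (μn : ℕ → Measure Y) (μ : Measure Y) : Prop :=
  ∀ f : ZeroAtInftyContinuousMap Y ℝ,
    Tendsto (fun n => ∫ y, f y ∂ μn n) atTop (𝓝 (∫ y, f y ∂ μ))

/-- The functional `J_d(μ) = ∫ d(x,y) dμ(x,y)`. -/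
noncomputable def Jfun {X : Type*} [MetricSpace X] {Ω : Set X} [MeasurableSpace X]
    (d : Ω → Ω → ℝ) (μ : Measure (Ω × Ω)) : ℝ≥0∞ :=
  ∫⁻ p, ENNReal.ofReal (d p.1 p.2) ∂ μ

private lemma exists_compact_ball {E : Type*} [MetricSpace E] [LocallyCompactSpace E] (x : E) :
    ∃ r : ℝ, 0 < r ∧ r ≤ 1 ∧ IsCompact (Metric.closedBall x r) := by
  obtain ⟨K, hK, hKx⟩ := exists_compact_mem_nhds x
  obtain ⟨r, hr, hrK⟩ := Metric.nhds_basis_closedBall.mem_iff.1 hKx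
  exact ⟨min r 1, lt_min hr one_pos, min_le_right _ _,
    hK.of_isClosed_subset Metric.isClosed_closedBall
      ((Metric.closedBall_subset_closedBall (min_le_left _ _)).trans hrK)⟩

lemma sigmaCompactSpace_of_connected {E : Type*} [MetricSpace E] [LocallyCompactSpace E]
    [ConnectedSpace E] : SigmaCompactSpace E := by
  classical
  set S : E → Set ℝ := fun x => {r : ℝ | r ≤ 1 ∧ IsCompact (Metric.closedBall x r)} with hS
  have hSne : ∀ x, (S x).Nonempty := fun x => by
    obtain ⟨r, _, hr1, hrc⟩ := exists_compact_ball x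
    exact ⟨r, hr1, hrc⟩
  have hSbdd : ∀ x, BddAbove (S x) := fun x => ⟨1, fun r hr => hr.1⟩
  set f : E → ℝ := fun x => sSup (S x) with hf
  have hfle : ∀ x, f x ≤ 1 := fun x => csSup_le (hSne x) fun r hr => hr.1
  have hfpos : ∀ x, 0 < f x := fun x => by
    obtain ⟨r, hr0, hr1, hrc⟩ := exists_compact_ball x
    exact lt_of_lt_of_le hr0 (le_csSup (hSbdd x) ⟨hr1, hrc⟩)
  have hball : ∀ x, ∀ r : ℝ, r < f x → IsCompact (Metric.closedBall x r) := by
    intro x r hr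
    obtain ⟨r', hr'S, hrr'⟩ := exists_lt_of_lt_csSup (hSne x) hr
    exact hr'S.2.of_isClosed_subset Metric.isClosed_closedBall
      (Metric.closedBall_subset_closedBall hrr'.le)
  have hlip : ∀ x y : E, min 1 (f x - dist x y) ≤ f y := by
    intro x y
    by_contra hcon
    push_neg at hcon
    obtain ⟨r, hfyr, hr⟩ := exists_between hcon
    have hr1 : r < 1 := lt_of_lt_of_le hr (min_le_left _ _)
    have hr2 : r + dist x y < f x := by
      have := lt_of_lt_of_le hr (min_le_right _ _); linarith
    refine absurd (le_csSup (hSbdd y) (⟨hr1.le, ?_⟩ : r ∈ S y)) (not_le.2 hfyr)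
    refine (hball x _ hr2).of_isClosed_subset Metric.isClosed_closedBall ?_
    intro z hz
    simp only [Metric.mem_closedBall] at hz ⊢
    have h3 := dist_triangle z y x
    have h4 : dist y x = dist x y := dist_comm _ _
    linarith
  obtain ⟨x0⟩ : Nonempty E := inferInstance
  set K : ℕ → Set E := fun n => Nat.rec ({x0} : Set E)
      (fun _ Kn => closure (⋃ x ∈ Kn, Metric.closedBall x (f x / 2))) n with hK
  have hKsucc : ∀ n, K (n + 1) = closure (⋃ x ∈ K n, Metric.closedBall x (f x / 2)) :=
    fun n => rfl
  have hKcomp : ∀ n, IsCompact (K n) := by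
    intro n; induction n with
    | zero => exact isCompact_singleton
    | succ n ih =>
      have hcover : K n ⊆ ⋃ x ∈ K n, Metric.ball x (f x / 8) := fun x hx =>
        mem_biUnion hx (Metric.mem_ball_self (by linarith [hfpos x]))
      obtain ⟨t, htK, htfin, htcover⟩ := ih.elim_finite_subcover_image
        (fun x _ => Metric.isOpen_ball) hcover
      have hsub : (⋃ x ∈ K n, Metric.closedBall x (f x / 2)) ⊆
          ⋃ x ∈ t, Metric.closedBall x (11 / 16 * f x) := by
        intro z hz
        obtain ⟨y, hy, hzy⟩ := mem_iUnion₂.1 hz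
        obtain ⟨x, hxt, hyx⟩ := mem_iUnion₂.1 (htcover hy)
        have hd : dist y x < f x / 8 := Metric.mem_ball.1 hyx
        have h1 : f y - dist y x ≤ 1 := by
          have := hfle y; have := dist_nonneg (x := y) (y := x); linarith
        have hfy : f y ≤ f x + dist y x := by
          have h2 := hlip y x; rw [min_eq_right h1] at h2; linarith
        refine mem_iUnion₂.2 ⟨x, hxt, Metric.mem_closedBall.2 ?_⟩
        have hzy' : dist z y ≤ f y / 2 := Metric.mem_closedBall.1 hzy
        have h5 := dist_triangle z y x
        linarith
      have hcomp : IsCompact (⋃ x ∈ t, Metric.closedBall x (11 / 16 * f x)) :=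
        htfin.isCompact_biUnion fun x _ => hball x _ (by linarith [hfpos x])
      rw [hKsucc]
      exact hcomp.of_isClosed_subset isClosed_closure (closure_minimal hsub hcomp.isClosed)
  have hKmem : ∀ n, ∀ y ∈ K n, Metric.closedBall y (f y / 2) ⊆ K (n + 1) := by
    intro n y hy
    rw [hKsucc]
    exact fun z hz => subset_closure (mem_biUnion hy hz)
  have hUopen : IsOpen (⋃ n, K n) := by
    rw [Metric.isOpen_iff]
    intro z hz
    obtain ⟨n, hn⟩ := mem_iUnion.1 hz
    exact ⟨f z / 2, by linarith [hfpos z], fun w hw =>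
      mem_iUnion.2 ⟨n + 1, hKmem n z hn (Metric.ball_subset_closedBall hw)⟩⟩
  have hUclosed : IsClosed (⋃ n, K n) := by
    rw [← closure_subset_iff_isClosed]
    intro x hx
    obtain ⟨y, hyU, hxy⟩ := Metric.mem_closure_iff.1 hx (f x / 4) (by linarith [hfpos x])
    obtain ⟨n, hyn⟩ := mem_iUnion.1 hyU
    refine mem_iUnion.2 ⟨n + 1, hKmem n y hyn ?_⟩
    have h2 : f x - dist x y ≤ 1 := by
      have := hfle x; have := dist_nonneg (x := x) (y := y); linarith
    have h1 : f x - dist x y ≤ f y := by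
      have := hlip x y; rw [min_eq_right h2] at this; linarith
    have hd0 := dist_nonneg (x := x) (y := y)
    have : dist x y ≤ f y / 2 := by linarith
    exact Metric.mem_closedBall.2 (by rw [dist_comm] at this ⊢; exact this)
  have hUuniv : (⋃ n, K n) = univ :=
    IsClopen.eq_univ ⟨hUclosed, hUopen⟩ ⟨x0, mem_iUnion.2 ⟨0, rfl⟩⟩
  exact ⟨⟨K, hKcomp, hUuniv⟩⟩

/-- Part-1 (liminf) abstract lemma. -/
lemma stmt5_liminf_aux {E : Type*} [MetricSpace E] [MeasurableSpace E] [BorelSpace E]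
    [LocallyCompactSpace E] [SigmaCompactSpace E]
    (D : E → ℝ) (hD : Continuous D) (hD0 : ∀ p, 0 ≤ D p)
    (Dn : ℕ → E → ℝ) (hDn0 : ∀ n p, 0 ≤ Dn n p)
    (hconv : ∀ K : Set E, IsCompact K → ∀ ε : ℝ, 0 < ε →
      ∃ N : ℕ, ∀ n ≥ N, ∀ p ∈ K, |Dn n p - D p| < ε)
    (μn : ℕ → Measure E) (μ : Measure E) (hμn : ∀ n, IsFiniteMeasure (μn n))
    (hμ : IsFiniteMeasure μ)
    (hw : ∀ f : ZeroAtInftyContinuousMap E ℝ,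
      Tendsto (fun n => ∫ y, f y ∂ μn n) atTop (𝓝 (∫ y, f y ∂ μ))) :
    ∫⁻ p, ENNReal.ofReal (D p) ∂μ ≤
      liminf (fun n => ∫⁻ p, ENNReal.ofReal (Dn n p) ∂ μn n) atTop := by
  set L := liminf (fun n => ∫⁻ p, ENNReal.ofReal (Dn n p) ∂ μn n) atTop with hL
  -- Step A
  have stepA : ∀ f : C(E, ℝ), HasCompactSupport (f : E → ℝ) → (∀ p, 0 ≤ f p) →
      (∀ p, f p ≤ D p) → ∫⁻ p, ENNReal.ofReal (f p) ∂μ ≤ L := by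
    intro f hfc hf0 hfD
    have key : ∀ ε : ℝ, 0 < ε → ∫⁻ p, ENNReal.ofReal (f p - ε) ∂μ ≤ L := by
      intro ε hε
      set g : E → ℝ := fun p => max (f p - ε) 0 with hg
      have hgc : Continuous g := (f.continuous.sub continuous_const).max continuous_const
      have hgs : HasCompactSupport g := by
        refine hfc.mono fun p hp => ?_
        simp only [hg, Function.mem_support, ne_eq] at hp ⊢
        intro h0
        apply hp
        rw [h0]
        simp [le_of_lt hε]
      have hzero : Tendsto g (Filter.cocompact E) (𝓝 0) := hgs.is_zero_at_infty
      set g₀ : ZeroAtInftyContinuousMap E ℝ := ⟨⟨g, hgc⟩, hzero⟩ with hg₀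
      have hconv_int : Tendsto (fun n => ∫ p, g p ∂ μn n) atTop (𝓝 (∫ p, g p ∂ μ)) := hw g₀
      have hint : ∀ (ν : Measure E), IsFiniteMeasure ν →
          ENNReal.ofReal (∫ p, g p ∂ν) = ∫⁻ p, ENNReal.ofReal (g p) ∂ν := by
        intro ν hν
        exact MeasureTheory.ofReal_integral_eq_lintegral_ofReal
          (hgc.integrable_of_hasCompactSupport hgs)
          (Eventually.of_forall fun p => le_max_right _ _)
      have h2 : Tendsto (fun n => ∫⁻ p, ENNReal.ofReal (g p) ∂ μn n) atTop
          (𝓝 (∫⁻ p, ENNReal.ofReal (g p) ∂ μ)) := by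
        have h3 := (ENNReal.continuous_ofReal.tendsto _).comp hconv_int
        have h4 : ∀ n, ENNReal.ofReal (∫ p, g p ∂ μn n)
            = ∫⁻ p, ENNReal.ofReal (g p) ∂ μn n := fun n => hint _ (hμn n)
        rw [hint μ hμ] at h3
        exact h3.congr fun n => h4 n
      obtain ⟨N, hN⟩ := hconv (tsupport f) hfc ε hε
      have hev : ∀ᶠ n in atTop, ∫⁻ p, ENNReal.ofReal (g p) ∂ μn n ≤
          ∫⁻ p, ENNReal.ofReal (Dn n p) ∂ μn n := by
        filter_upwards [eventually_ge_atTop N] with n hn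
        refine lintegral_mono fun p => ENNReal.ofReal_le_ofReal ?_
        by_cases hp : p ∈ tsupport (f : E → ℝ)
        · have h3 := hN n hn p hp
          have h4 : D p - ε ≤ Dn n p := by
            rcases abs_lt.1 h3 with ⟨h5, _⟩; linarith
          have h6 := hfD p
          exact max_le (by linarith) (hDn0 n p)
        · have hfp : f p = 0 := image_eq_zero_of_notMem_tsupport hp
          simp only [hg, hfp]
          exact max_le (by linarith [hDn0 n p]) (hDn0 n p)
      calc ∫⁻ p, ENNReal.ofReal (f p - ε) ∂μ
          ≤ ∫⁻ p, ENNReal.ofReal (g p) ∂μ :=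
            lintegral_mono fun p => ENNReal.ofReal_le_ofReal (le_max_left _ _)
        _ = liminf (fun n => ∫⁻ p, ENNReal.ofReal (g p) ∂ μn n) atTop := h2.liminf_eq.symm
        _ ≤ L := liminf_le_liminf hev
    -- remove ε via monotone convergence
    have hmono : Monotone (fun k : ℕ => fun p => ENNReal.ofReal (f p - 1 / ((k : ℝ) + 1))) := by
      intro k k' hk p
      refine ENNReal.ofReal_le_ofReal (by
        have h1 : 1 / ((k' : ℝ) + 1) ≤ 1 / ((k : ℝ) + 1) := by
          apply one_div_le_one_div_of_le
          · positivity
          · exact_mod_cast add_le_add_left (Nat.cast_le.2 hk) 1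
        linarith)
    have hsup : ∀ p, ⨆ k : ℕ, ENNReal.ofReal (f p - 1 / ((k : ℝ) + 1))
        = ENNReal.ofReal (f p) := by
      intro p
      have ht1 : Tendsto (fun k : ℕ => ENNReal.ofReal (f p - 1 / ((k : ℝ) + 1))) atTop
          (𝓝 (ENNReal.ofReal (f p))) := by
        have : Tendsto (fun k : ℕ => f p - 1 / ((k : ℝ) + 1)) atTop (𝓝 (f p - 0)) :=
          tendsto_const_nhds.sub tendsto_one_div_add_atTop_nhds_zero_nat
        rw [sub_zero] at this
        exact (ENNReal.continuous_ofReal.tendsto _).comp this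
      have ht2 := tendsto_atTop_iSup (fun k k' hk => hmono hk p)
      exact tendsto_nhds_unique ht2 ht1
    have hmeas : ∀ k : ℕ, Measurable fun p => ENNReal.ofReal (f p - 1 / ((k : ℝ) + 1)) :=
      fun k => (ENNReal.continuous_ofReal.comp
        (f.continuous.sub continuous_const)).measurable
    calc ∫⁻ p, ENNReal.ofReal (f p) ∂μ
        = ∫⁻ p, ⨆ k : ℕ, ENNReal.ofReal (f p - 1 / ((k : ℝ) + 1)) ∂μ := by
          refine lintegral_congr fun p => (hsup p).symm
      _ = ⨆ k : ℕ, ∫⁻ p, ENNReal.ofReal (f p - 1 / ((k : ℝ) + 1)) ∂μ :=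
          lintegral_iSup hmeas hmono
      _ ≤ L := iSup_le fun k => key _ (by positivity)
  -- Step B
  have hgm : ∀ m : ℕ, ∃ f : C(E, ℝ), HasCompactSupport (f : E → ℝ) ∧ (∀ p, 0 ≤ f p) ∧
      (∀ p, f p ≤ D p) ∧ ∀ p ∈ compactCovering E m, min (D p) (m : ℝ) ≤ f p := by
    intro m
    obtain ⟨φ, hφ1, _, hφc, hφmem⟩ := exists_continuous_one_zero_of_isCompact
      (isCompact_compactCovering E m) isClosed_empty (disjoint_empty _)
    refine ⟨⟨fun p => min (D p) (m : ℝ) * φ p, (hD.min continuous_const).mul φ.continuous⟩,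
      ?_, ?_, ?_, ?_⟩
    · refine hφc.mono fun p hp => ?_
      simp only [Function.mem_support, ne_eq] at hp ⊢
      intro h0; exact hp (by simp [ContinuousMap.coe_mk] at h0 ⊢; right; exact h0)
    · intro p
      exact mul_nonneg (le_min (hD0 p) (Nat.cast_nonneg m)) (hφmem p).1
    · intro p
      calc min (D p) (m : ℝ) * φ p ≤ min (D p) (m : ℝ) * 1 :=
            mul_le_mul_of_nonneg_left (hφmem p).2 (le_min (hD0 p) (Nat.cast_nonneg m))
        _ ≤ D p := by rw [mul_one]; exact min_le_left _ _
    · intro p hp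
      have : φ p = 1 := hφ1 hp
      simp [ContinuousMap.coe_mk, this]
  have hbound : ∀ m : ℕ, ∫⁻ p, (compactCovering E m).indicator
      (fun p => min (ENNReal.ofReal (D p)) (m : ℝ≥0∞)) p ∂μ ≤ L := by
    intro m
    obtain ⟨f, h1, h2, h3, h4⟩ := hgm m
    refine le_trans (lintegral_mono fun p => ?_) (stepA f h1 h2 h3)
    by_cases hp : p ∈ compactCovering E m
    · rw [indicator_of_mem hp]
      have hmin : min (ENNReal.ofReal (D p)) ((m : ℕ) : ℝ≥0∞)
          = ENNReal.ofReal (min (D p) (m : ℝ)) := by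
        have hmof : Monotone ENNReal.ofReal := fun _ _ h => ENNReal.ofReal_le_ofReal h
        rw [(show ((m : ℕ) : ℝ≥0∞) = ENNReal.ofReal (m : ℝ) from (ENNReal.ofReal_natCast m).symm)]
        exact (hmof.map_min).symm
      rw [hmin]
      exact ENNReal.ofReal_le_ofReal (h4 p hp)
    · rw [indicator_of_notMem hp]; exact zero_le
  have hsup2 : ∀ p, ⨆ m : ℕ, (compactCovering E m).indicator
      (fun p => min (ENNReal.ofReal (D p)) (m : ℝ≥0∞)) p = ENNReal.ofReal (D p) := by
    intro p
    apply le_antisymm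
    · refine iSup_le fun m => ?_
      by_cases hp : p ∈ compactCovering E m
      · rw [indicator_of_mem hp]; exact min_le_left _ _
      · simp [indicator_of_notMem hp]
    · obtain ⟨m0, hm0⟩ := exists_mem_compactCovering p
      set m1 : ℕ := ⌈D p⌉₊
      refine le_trans ?_ (le_iSup _ (max m0 m1))
      have hpmem : p ∈ compactCovering E (max m0 m1) :=
        compactCovering_subset E (le_max_left _ _) hm0
      rw [indicator_of_mem hpmem]
      refine le_min le_rfl ?_
      calc ENNReal.ofReal (D p) ≤ ENNReal.ofReal (m1 : ℝ) :=
            ENNReal.ofReal_le_ofReal (Nat.le_ceil _)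
        _ = (m1 : ℝ≥0∞) := ENNReal.ofReal_natCast m1
        _ ≤ ((max m0 m1 : ℕ) : ℝ≥0∞) := by exact_mod_cast Nat.cast_le.2 (le_max_right m0 m1)
  have hmono2 : Monotone (fun m : ℕ => fun p => (compactCovering E m).indicator
      (fun p => min (ENNReal.ofReal (D p)) (m : ℝ≥0∞)) p) := by
    intro m m' hmm' p
    dsimp only
    by_cases hp : p ∈ compactCovering E m
    · rw [indicator_of_mem hp, indicator_of_mem (compactCovering_subset E hmm' hp)]
      exact le_min (min_le_left _ _) ((min_le_right _ _).trans (by exact_mod_cast Nat.cast_le.2 hmm'))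
    · simp [indicator_of_notMem hp]
  have hmeas2 : ∀ m : ℕ, Measurable (fun p => (compactCovering E m).indicator
      (fun p => min (ENNReal.ofReal (D p)) (m : ℝ≥0∞)) p) := by
    intro m
    exact (((ENNReal.continuous_ofReal.comp hD).measurable).min measurable_const).indicator
      (isCompact_compactCovering E m).isClosed.measurableSet
  calc ∫⁻ p, ENNReal.ofReal (D p) ∂μ
      = ∫⁻ p, ⨆ m : ℕ, (compactCovering E m).indicator
          (fun p => min (ENNReal.ofReal (D p)) (m : ℝ≥0∞)) p ∂μ :=
        lintegral_congr fun p => (hsup2 p).symm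
    _ = ⨆ m : ℕ, ∫⁻ p, (compactCovering E m).indicator
          (fun p => min (ENNReal.ofReal (D p)) (m : ℝ≥0∞)) p ∂μ := lintegral_iSup hmeas2 hmono2
    _ ≤ L := iSup_le hbound

/-- Part-2 (limsup) abstract lemma: with the constant recovery sequence. -/
lemma stmt5_limsup_aux {E : Type*} [MetricSpace E] [MeasurableSpace E] [OpensMeasurableSpace E]
    (D : E → ℝ) (c : ℝ≥0∞) (hc : c ≠ ⊤)
    (Dn : ℕ → E → ℝ) (hDn : ∀ n, Continuous (Dn n))
    (hb : ∀ n p, ENNReal.ofReal (Dn n p) ≤ c * ENNReal.ofReal (D p))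
    (hpt : ∀ p, Tendsto (fun n => Dn n p) atTop (𝓝 (D p)))
    (μ : Measure E) :
    limsup (fun n => ∫⁻ p, ENNReal.ofReal (Dn n p) ∂μ) atTop ≤
      ∫⁻ p, ENNReal.ofReal (D p) ∂μ := by
  by_cases hI : ∫⁻ p, ENNReal.ofReal (D p) ∂μ = ⊤
  · rw [hI]; exact le_top
  · have hfin : ∫⁻ p, c * ENNReal.ofReal (D p) ∂μ ≠ ⊤ := by
      rw [lintegral_const_mul' _ _ hc]
      exact ENNReal.mul_ne_top hc hI
    have htend : Tendsto (fun n => ∫⁻ p, ENNReal.ofReal (Dn n p) ∂μ) atTop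
        (𝓝 (∫⁻ p, ENNReal.ofReal (D p) ∂μ)) := by
      refine tendsto_lintegral_of_dominated_convergence
        (fun p => c * ENNReal.ofReal (D p))
        (fun n => (ENNReal.continuous_ofReal.comp (hDn n)).measurable)
        (fun n => Eventually.of_forall (hb n)) hfin
        (Eventually.of_forall fun p => ?_)
      exact (ENNReal.continuous_ofReal.tendsto _).comp (hpt p)
    rw [htend.limsup_eq]


private lemma MemD.nonneg' {X : Type*} [MetricSpace X] {α : ℝ} (hα : 0 < α) {Ω : Set X}
    {d : Ω → Ω → ℝ} (h : MemD α Ω d) (x y : Ω) : 0 ≤ d x y :=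
  le_trans (mul_nonneg (inv_nonneg.2 hα.le) dist_nonneg) (h.2.2 x y).1

private lemma MemD.continuous' {X : Type*} [MetricSpace X] {α : ℝ} (hα : 0 < α) {Ω : Set X}
    {d : Ω → Ω → ℝ} (h : MemD α Ω d) : Continuous (fun p : Ω × Ω => d p.1 p.2) := by
  obtain ⟨⟨hsym, htri, _⟩, _, hcomp⟩ := h
  rw [Metric.continuous_iff]
  intro b ε hε
  refine ⟨ε / (2 * α), by positivity, fun a ha => ?_⟩
  have key : ∀ p q : Ω × Ω, d p.1 p.2 - d q.1 q.2 ≤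
      α * dist (p.1 : X) (q.1 : X) + α * dist (p.2 : X) (q.2 : X) := by
    intro p q
    have t1 := htri p.1 q.1 p.2
    have t2 := htri q.1 q.2 p.2
    have s1 := hsym q.2 p.2
    have b1 := (hcomp p.1 q.1).2
    have b2 := (hcomp q.2 p.2).2
    rw [dist_comm] at b2
    linarith
  have hε2 : α * (ε / (2 * α)) = ε / 2 := by field_simp
  have hd1 : dist (a.1 : X) (b.1 : X) < ε / (2 * α) := by
    have h1 : dist a.1 b.1 ≤ dist a b := by rw [Prod.dist_eq]; exact le_max_left _ _
    exact lt_of_le_of_lt h1 ha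
  have hd2 : dist (a.2 : X) (b.2 : X) < ε / (2 * α) := by
    have h1 : dist a.2 b.2 ≤ dist a b := by rw [Prod.dist_eq]; exact le_max_right _ _
    exact lt_of_le_of_lt h1 ha
  have m1 : α * dist (a.1 : X) (b.1 : X) < ε / 2 :=
    hε2 ▸ mul_lt_mul_of_pos_left hd1 hα
  have m2 : α * dist (a.2 : X) (b.2 : X) < ε / 2 :=
    hε2 ▸ mul_lt_mul_of_pos_left hd2 hα
  have e1 : dist (b.1 : X) (a.1 : X) = dist (a.1 : X) (b.1 : X) := dist_comm _ _
  have e2 : dist (b.2 : X) (a.2 : X) = dist (a.2 : X) (b.2 : X) := dist_comm _ _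
  have k1 := key a b
  have k2 := key b a
  rw [e1, e2] at k2
  rw [Real.dist_eq, abs_sub_lt_iff]
  constructor <;> linarith

/-- uniform convergence of the distances on compact sets implies
Γ-convergence of the functionals `J_{dn}` to `J_d` on nonnegative finite Borel
measures with the weak* topology. -/
theorem stmt5 {X : Type*} [MetricSpace X] [MeasurableSpace X] [BorelSpace X]
    [LocallyCompactSpace X] [CompleteSpace X]
    (Ω : Set X) (hΩ : IsOpen Ω) (α : ℝ) (hα : 1 < α)
    (hne : ∃ d₀ : Ω → Ω → ℝ, MemD α Ω d₀)
    (dn : ℕ → Ω → Ω → ℝ) (hdn : ∀ n, MemD α Ω (dn n))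
    (d : Ω → Ω → ℝ) (hd : MemD α Ω d)
    (hconv : TendstoUnifCompactly dn d) :
    (∀ (μn : ℕ → Measure (Ω × Ω)) (μ : Measure (Ω × Ω)),
      (∀ n, IsFiniteMeasure (μn n)) → IsFiniteMeasure μ → WeakStarConv μn μ →
      Jfun d μ ≤ liminf (fun n => Jfun (dn n) (μn n)) atTop) ∧
    ∀ μ : Measure (Ω × Ω), IsFiniteMeasure μ →
      ∃ μn : ℕ → Measure (Ω × Ω), (∀ n, IsFiniteMeasure (μn n)) ∧ WeakStarConv μn μ ∧
        limsup (fun n => Jfun (dn n) (μn n)) atTop ≤ Jfun d μ := by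
  have hα0 : (0 : ℝ) < α := lt_trans one_pos hα
  haveI hLC : LocallyCompactSpace Ω := hΩ.locallyCompactSpace
  have hpt : ∀ p : ↥Ω × ↥Ω, Tendsto (fun n => dn n p.1 p.2) atTop (𝓝 (d p.1 p.2)) := by
    intro p
    rw [Metric.tendsto_atTop]
    intro ε hε
    obtain ⟨N, hN⟩ := hconv {p} isCompact_singleton ε hε
    exact ⟨N, fun n hn => by rw [Real.dist_eq]; exact hN n hn p rfl⟩
  have hb : ∀ (n : ℕ) (p : ↥Ω × ↥Ω), ENNReal.ofReal (dn n p.1 p.2) ≤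
      ENNReal.ofReal (α ^ 2) * ENNReal.ofReal (d p.1 p.2) := by
    intro n p
    rw [← ENNReal.ofReal_mul (by positivity)]
    refine ENNReal.ofReal_le_ofReal ?_
    have h1 := ((hdn n).2.2 p.1 p.2).2
    have h2 := (hd.2.2 p.1 p.2).1
    have h3 : dist (p.1 : X) (p.2 : X) ≤ α * d p.1 p.2 := by
      have h4 := mul_le_mul_of_nonneg_left h2 hα0.le
      rw [← mul_assoc, mul_inv_cancel₀ hα0.ne', one_mul] at h4
      exact h4
    calc dn n p.1 p.2 ≤ α * dist (p.1 : X) (p.2 : X) := h1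
      _ ≤ α * (α * d p.1 p.2) := mul_le_mul_of_nonneg_left h3 hα0.le
      _ = α ^ 2 * d p.1 p.2 := by ring
  rcases isEmpty_or_nonempty (↥Ω) with hemp | hnem
  · have hzero : ∀ ν : Measure (↥Ω × ↥Ω), ν = 0 := fun ν => ν.eq_zero_of_isEmpty
    constructor
    · intro μn μ _ _ _
      have h0 : Jfun d μ = 0 := by rw [hzero μ]; simp [Jfun]
      rw [h0]; exact zero_le
    · intro μ hμ
      refine ⟨fun _ => μ, fun _ => hμ, fun f => tendsto_const_nhds, ?_⟩
      have h0 : ∀ n, Jfun (dn n) μ = 0 := fun n => by rw [hzero μ]; simp [Jfun]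
      simp only [h0]
      rw [limsup_const]
      exact zero_le
  · obtain ⟨d₀, hd₀⟩ := hne
    haveI hpc : PathConnectedSpace Ω := by
      refine ⟨hnem, fun x y => ?_⟩
      have hlen := hd₀.2.1 x y
      have hne2 : ∃ γ : ℝ → Ω, LipCurve d₀ γ ∧ γ 0 = x ∧ γ 1 = y := by
        by_contra hcon
        push_neg at hcon
        have htop : ∀ γ : ℝ → Ω, (⨅ (_ : LipCurve d₀ γ) (_ : γ 0 = x) (_ : γ 1 = y),
            pathLength d₀ γ) = ⊤ := by
          intro γ
          by_cases h1 : LipCurve d₀ γ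
          · by_cases h2 : γ 0 = x
            · have h3 : γ 1 ≠ y := hcon γ h1 h2
              simp [h1, h2, h3]
            · simp [h2]
          · simp [h1]
        rw [iInf_congr htop] at hlen
        simp only [iInf_top] at hlen
        exact ENNReal.ofReal_ne_top hlen
      obtain ⟨γ, ⟨Kc, hKc⟩, hγ0, hγ1⟩ := hne2
      set C : ℝ := max (α * Kc) 0 with hC
      have hCnn : 0 ≤ C := le_max_right _ _
      have hdist : ∀ s ∈ Icc (0:ℝ) 1, ∀ t ∈ Icc (0:ℝ) 1,
          dist (γ s) (γ t) ≤ C * |s - t| := by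
        intro s hs t ht
        have h1 := hKc s hs t ht
        have h2 := (hd₀.2.2 (γ s) (γ t)).1
        have h3 : dist (γ s) (γ t) ≤ α * d₀ (γ s) (γ t) := by
          have h4 := mul_le_mul_of_nonneg_left h2 hα0.le
          rw [← mul_assoc, mul_inv_cancel₀ hα0.ne', one_mul] at h4
          exact h4
        calc dist (γ s) (γ t) ≤ α * d₀ (γ s) (γ t) := h3
          _ ≤ α * (Kc * |s - t|) := mul_le_mul_of_nonneg_left h1 hα0.le
          _ = (α * Kc) * |s - t| := by ring
          _ ≤ C * |s - t| := mul_le_mul_of_nonneg_right (le_max_left _ _) (abs_nonneg _)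
      refine ⟨⟨⟨fun t : unitInterval => γ t, ?_⟩, ?_, ?_⟩⟩
      · rw [Metric.continuous_iff]
        intro b ε hε
        refine ⟨ε / (C + 1), by positivity, fun a ha => ?_⟩
        have hab : dist (a : ℝ) (b : ℝ) < ε / (C + 1) := ha
        have h5 := hdist a a.2 b b.2
        have h6 : |(a : ℝ) - (b : ℝ)| = dist (a : ℝ) (b : ℝ) := (Real.dist_eq _ _).symm
        calc dist (γ a) (γ b) ≤ C * |(a : ℝ) - (b : ℝ)| := h5
          _ = C * dist (a : ℝ) (b : ℝ) := by rw [h6]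
          _ ≤ C * (ε / (C + 1)) := mul_le_mul_of_nonneg_left hab.le hCnn
          _ < ε := by
            have h7 : (0 : ℝ) < C + 1 := by linarith
            have h8 : 0 < ε / (C + 1) := by positivity
            nlinarith [div_mul_cancel₀ ε h7.ne']
      · simpa using hγ0
      · simpa using hγ1
    haveI : SigmaCompactSpace Ω := sigmaCompactSpace_of_connected
    constructor
    · intro μn μ hμn hμ hw
      exact stmt5_liminf_aux (fun p : ↥Ω × ↥Ω => d p.1 p.2) (MemD.continuous' hα0 hd)
        (fun p => MemD.nonneg' hα0 hd p.1 p.2)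
        (fun n => fun p : ↥Ω × ↥Ω => dn n p.1 p.2)
        (fun n p => MemD.nonneg' hα0 (hdn n) p.1 p.2)
        hconv μn μ hμn hμ hw
    · intro μ hμ
      refine ⟨fun _ => μ, fun _ => hμ, fun f => tendsto_const_nhds, ?_⟩
      exact stmt5_limsup_aux (fun p : ↥Ω × ↥Ω => d p.1 p.2) (ENNReal.ofReal (α ^ 2))
        ENNReal.ofReal_ne_top (fun n => fun p : ↥Ω × ↥Ω => dn n p.1 p.2)
        (fun n => MemD.continuous' hα0 (hdn n)) hb hpt μ
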